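/- Let P ≻ 0, F n×n, G n×1 with q := GᵀPG > 0, and suppose W := P - FᵀPF + FᵀPG q⁻¹ GᵀPF ≻ 0. Factor W = X_Wᵀ X_W with X_W invertible and q = x_Q² with x_Q > 0. For a 1×n matrix K with H := K - q⁻¹GᵀPF, the inequality P - (F - GK)ᵀP(F - GK) ≻ 0 holds if and only if M := x_Q · H · X_W⁻¹ satisfies MᵀM ≺ I. -/

import Mathlib

open Matrix

private lemma congrPD {n : ℕ} {A B : Matrix (Fin n) (Fin n) ℝ}
    (hA : A.PosDef) (hB : IsUnit B) : (Bᵀ * A * B).PosDef := by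
  have hH : (Bᵀ * A * B).IsHermitian := by
    have := Matrix.isHermitian_conjTranspose_mul_mul B hA.1
    simpa using this
  rw [Matrix.posDef_iff_dotProduct_mulVec] at hA ⊢
  refine ⟨hH, fun x hx => ?_⟩
  have hBx : B *ᵥ x ≠ 0 := fun h0 => hx (Matrix.mulVec_injective_iff_isUnit.2 hB (by simpa using h0))
  have h2 := hA.2 (x := B *ᵥ x) hBx
  simpa only [star_trivial, ← Matrix.mulVec_mulVec, Matrix.dotProduct_mulVec,
    Matrix.vecMul_transpose] using h2

theorem stmt5 {n : ℕ}
    (P F : Matrix (Fin n) (Fin n) ℝ) (G : Matrix (Fin n) (Fin 1) ℝ)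
    (K : Matrix (Fin 1) (Fin n) ℝ)
    (hP : P.PosDef) (q : ℝ) (hq : q = (Gᵀ * P * G) 0 0) (hqpos : 0 < q)
    (W : Matrix (Fin n) (Fin n) ℝ)
    (hW : W = P - Fᵀ * P * F + q⁻¹ • (Fᵀ * P * G * (Gᵀ * P * F)))
    (hWpd : W.PosDef)
    (XW : Matrix (Fin n) (Fin n) ℝ) (hXW : IsUnit XW) (hWfac : W = XWᵀ * XW)
    (xQ : ℝ) (hxQ : 0 < xQ) (hxQsq : q = xQ ^ 2)
    (H : Matrix (Fin 1) (Fin n) ℝ) (hH : H = K - q⁻¹ • (Gᵀ * P * F))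
    (M : Matrix (Fin 1) (Fin n) ℝ) (hM : M = xQ • (H * XW⁻¹)) :
    (P - (F - G * K)ᵀ * P * (F - G * K)).PosDef ↔ (1 - Mᵀ * M).PosDef := by
  have hq0 : q ≠ 0 := hqpos.ne'
  have hPsym : Pᵀ = P := by
    have := hP.1
    simpa [Matrix.IsHermitian] using this
  have hGPG : Gᵀ * P * G = q • (1 : Matrix (Fin 1) (Fin 1) ℝ) := by
    ext i j
    fin_cases i; fin_cases j
    simp [hq, Matrix.one_apply]
  have hGPGK : Gᵀ * (P * (G * K)) = q • K := by
    rw [← Matrix.mul_assoc, ← Matrix.mul_assoc, hGPG, Matrix.smul_mul, Matrix.one_mul]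
  have hdet : IsUnit XW.det := (Matrix.isUnit_iff_isUnit_det XW).mp hXW
  have hdetT : IsUnit XWᵀ.det := by rwa [Matrix.det_transpose]
  have hinv1 : XW⁻¹ * XW = 1 := Matrix.nonsing_inv_mul XW hdet
  have key : P - (F - G * K)ᵀ * P * (F - G * K) = W - q • (Hᵀ * H) := by
    subst hW hH
    simp only [Matrix.sub_mul, Matrix.mul_sub, Matrix.transpose_mul, Matrix.transpose_smul,
      Matrix.smul_mul, Matrix.mul_smul, Matrix.transpose_transpose, Matrix.mul_assoc,
      Matrix.transpose_sub, hPsym, hGPGK, smul_smul]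
    match_scalars <;> field_simp <;> ring
  have hMM : XWᵀ * (Mᵀ * M) * XW = q • (Hᵀ * H) := by
    rw [hM]
    simp only [Matrix.transpose_smul, Matrix.transpose_mul, Matrix.smul_mul, Matrix.mul_smul,
      smul_smul, Matrix.mul_assoc, Matrix.transpose_nonsing_inv, hinv1, Matrix.mul_one]
    rw [Matrix.mul_nonsing_inv_cancel_left _ _ hdetT, hxQsq, pow_two]
  have key2 : P - (F - G * K)ᵀ * P * (F - G * K) = XWᵀ * (1 - Mᵀ * M) * XW := by
    rw [key, Matrix.mul_sub, Matrix.sub_mul, Matrix.mul_one, ← hWfac, hMM]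
  rw [key2]
  constructor
  · intro h
    have h2 := congrPD h (Matrix.isUnit_nonsing_inv_iff.mpr hXW)
    have e : XW⁻¹ᵀ * (XWᵀ * (1 - Mᵀ * M) * XW) * XW⁻¹ = 1 - Mᵀ * M := by
        rw [Matrix.transpose_nonsing_inv]
        rw [Matrix.mul_assoc, Matrix.mul_nonsing_inv_cancel_right _ _ hdet,
          Matrix.nonsing_inv_mul_cancel_left _ _ hdetT]
    rwa [e] at h2
  · intro h
    exact congrPD h hXW
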